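/- Let Q be a quandle, Λ an abelian group (written additively), and λ : Q × Q → Λ a quandle 2-cocycle. Then for every c ∈ Q the translated cochain (a,b) ↦ λ(a ◃ c, b ◃ c) differs from λ by a coboundary: there exists μ : Q → Λ with λ(a ◃ c, b ◃ c) = λ(a,b) + μ(a) − μ(a ◃ b) for all a, b ∈ Q. Consequently, for every Wirtinger code (n, κ, ε), every closed Q-colouring f of the code (f(n) = f(0)), and every c ∈ Q, the translated map f ◃ c : i ↦ f(i) ◃ c is again a closed Q-colouring, and W_λ(f ◃ c) = W_λ(f). -/

import Mathlib

/-- A quandle structure, given by operations `op = ◃` and `opInv = ◃⁻¹`. -/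
def IsQuandle {Q : Type*} (op opInv : Q → Q → Q) : Prop :=
  (∀ a, op a a = a) ∧
  (∀ a b, opInv (op a b) b = a ∧ op (opInv a b) b = a) ∧
  (∀ a b c, op (op a b) c = op (op a c) (op b c))

/-- A `Q`-colouring of the Wirtinger code `(n, κ, ε)` for a quandle `(Q, op, opInv)`. -/
def IsQCol {Q : Type*} (op opInv : Q → Q → Q) {n : ℕ} (κ : Fin n → Fin (n + 1))
    (ε : Fin n → ℤ) (f : Fin (n + 1) → Q) : Prop :=
  ∀ i : Fin n, f i.succ =
    if ε i = 1 then op (f i.castSucc) (f (κ i)) else opInv (f i.castSucc) (f (κ i))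

/-- The weight `W_λ(f) = ∑ᵢ wᵢ` of a `Q`-colouring `f`, where `wᵢ = λ(f(i−1), f(κ(i)))`
at a positive crossing and `wᵢ = −λ(f(i), f(κ(i)))` at a negative one. -/
def weight {Q Λ : Type*} [AddCommGroup Λ] (lam : Q → Q → Λ) {n : ℕ}
    (κ : Fin n → Fin (n + 1)) (ε : Fin n → ℤ) (f : Fin (n + 1) → Q) : Λ :=
  ∑ i : Fin n,
    if ε i = 1 then lam (f i.castSucc) (f (κ i)) else -lam (f i.succ) (f (κ i))

/-- For a quandle 2-cocycle `λ` and any `c ∈ Q`, the translated cochain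
`(a,b) ↦ λ(a ◃ c, b ◃ c)` differs from `λ` by a coboundary; consequently translating a
closed colouring by `c` yields again a closed colouring of the same weight. -/
lemma tel_sum {Λ : Type*} [AddCommGroup Λ] : ∀ {n : ℕ} (h : Fin (n+1) → Λ),
    ∑ i : Fin n, (h i.castSucc - h i.succ) = h 0 - h (Fin.last n) := by
  intro n
  induction n with
  | zero => simp
  | succ n ih =>
    intro h
    rw [Fin.sum_univ_castSucc]
    have := ih (fun i => h i.castSucc)
    simp only [Fin.succ_castSucc] at *
    rw [show (∑ i : Fin n, (h i.castSucc.castSucc - h i.succ.castSucc)) =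
        h 0 - h (Fin.last n).castSucc from by
      simpa only [Fin.succ_castSucc, Fin.castSucc_zero] using this]
    simp [Fin.succ_last]

theorem stmt_11 {Q Λ : Type*} [AddCommGroup Λ]
    (op opInv : Q → Q → Q) (hq : IsQuandle op opInv)
    (lam : Q → Q → Λ)
    (hcoc1 : ∀ a, lam a a = 0)
    (hcoc2 : ∀ a b c, lam a c + lam (op a c) (op b c) = lam a b + lam (op a b) c) :
    (∀ c : Q, ∃ μ : Q → Λ,
      ∀ a b : Q, lam (op a c) (op b c) = lam a b + μ a - μ (op a b)) ∧
    (∀ (n : ℕ) (κ : Fin n → Fin (n + 1)) (ε : Fin n → ℤ), (∀ i, ε i = 1 ∨ ε i = -1) →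
      ∀ f : Fin (n + 1) → Q, IsQCol op opInv κ ε f → f (Fin.last n) = f 0 →
      ∀ c : Q,
        IsQCol op opInv κ ε (fun i => op (f i) c) ∧
        op (f (Fin.last n)) c = op (f 0) c ∧
        weight lam κ ε (fun i => op (f i) c) = weight lam κ ε f) := by
  obtain ⟨hq1, hq2, hq3⟩ := hq
  have hinv : ∀ a b x, op x b = a → opInv a b = x := by
    intro a b x h
    rw [← h, (hq2 x b).1]
  have key : ∀ c a b, lam (op a c) (op b c) = lam a b + (-lam a c) - (-lam (op a b) c) := by
    intro c a b
    have h := hcoc2 a b c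
    have h2 : lam (op a c) (op b c) = lam a b + lam (op a b) c - lam a c := by
      rw [← h]; abel
    rw [h2]; abel
  constructor
  · intro c
    exact ⟨fun a => -lam a c, fun a b => key c a b⟩
  · intro n κ ε hε f hf hclosed c
    have hcol : IsQCol op opInv κ ε (fun i => op (f i) c) := by
      intro i
      have hfi := hf i
      rcases hε i with h1 | h1
      · rw [if_pos h1] at hfi ⊢
        simp only
        rw [hfi]
        exact hq3 _ _ _
      · have hne : ¬ (ε i = 1) := by rw [h1]; decide
        rw [if_neg hne] at hfi ⊢
        simp only
        have h2 : op (f i.succ) (f (κ i)) = f i.castSucc := by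
          rw [hfi, (hq2 _ _).2]
        apply (hinv _ _ _ _).symm
        rw [← hq3, h2]
    refine ⟨hcol, by rw [hclosed], ?_⟩
    set μ : Q → Λ := fun a => -lam a c with hμ
    have hterm : ∀ i : Fin n,
        (if ε i = 1 then lam (op (f i.castSucc) c) (op (f (κ i)) c)
          else -lam (op (f i.succ) c) (op (f (κ i)) c))
        = (if ε i = 1 then lam (f i.castSucc) (f (κ i)) else -lam (f i.succ) (f (κ i)))
          + (μ (f i.castSucc) - μ (f i.succ)) := by
      intro i
      have hfi := hf i
      rcases hε i with h1 | h1
      · rw [if_pos h1] at hfi ⊢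
        rw [if_pos h1, key, ← hfi, hμ]
        beta_reduce
        abel
      · have hne : ¬ (ε i = 1) := by rw [h1]; decide
        rw [if_neg hne] at hfi ⊢
        rw [if_neg hne]
        have h2 : op (f i.succ) (f (κ i)) = f i.castSucc := by
          rw [hfi, (hq2 _ _).2]
        rw [key, h2, hμ]
        beta_reduce
        abel
    unfold weight
    simp only [hterm]
    rw [Finset.sum_add_distrib, tel_sum (fun i => μ (f i))]
    simp [hclosed]
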